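/- arXiv:2408.07248 — 2 statements merged into one kernel-verified Lean document; each statement's English description precedes it below -/
import Mathlib

section
/- Let δ > 0 and let ξ_1, ξ_2, ξ_3, ξ_4 ∈ [0,1] satisfy ξ_1 + ξ_2 = ξ_3 + ξ_4, ξ_1^3 + ξ_2^3 = ξ_3^3 + ξ_4^3 + O(δ) (i.e. |ξ_1^3 + ξ_2^3 - ξ_3^3 - ξ_4^3| ≤ δ), and max_i ξ_i ≥ δ^(1/3). Then |ξ_1·ξ_2 - ξ_3·ξ_4| ≤ δ / (3·max_i ξ_i) · 3, i.e. |ξ_1ξ_2 - ξ_3ξ_4| ≲ δ / max_i ξ_i. -/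
/-- Key estimate in the cubic square function argument: dividing
`3ξ₁ξ₂(ξ₁+ξ₂) = 3ξ₃ξ₄(ξ₃+ξ₄) + O(δ)` by `3(ξ₁+ξ₂)`. -/
theorem stmt_4 (δ ξ₁ ξ₂ ξ₃ ξ₄ : ℝ) (hδ : 0 < δ)
    (h₁ : ξ₁ ∈ Set.Icc (0:ℝ) 1) (h₂ : ξ₂ ∈ Set.Icc (0:ℝ) 1)
    (h₃ : ξ₃ ∈ Set.Icc (0:ℝ) 1) (h₄ : ξ₄ ∈ Set.Icc (0:ℝ) 1)
    (hsum : ξ₁ + ξ₂ = ξ₃ + ξ₄)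
    (hcube : |ξ₁^3 + ξ₂^3 - ξ₃^3 - ξ₄^3| ≤ δ)
    (hmax : δ ^ ((1:ℝ)/3) ≤ max (max ξ₁ ξ₂) (max ξ₃ ξ₄)) :
    |ξ₁ * ξ₂ - ξ₃ * ξ₄| ≤ δ / (3 * max (max ξ₁ ξ₂) (max ξ₃ ξ₄)) * 3 := by
  obtain ⟨h10, h11⟩ := h₁
  obtain ⟨h20, h21⟩ := h₂
  obtain ⟨h30, h31⟩ := h₃
  obtain ⟨h40, h41⟩ := h₄
  set M := max (max ξ₁ ξ₂) (max ξ₃ ξ₄) with hM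
  have hMpos : 0 < M := lt_of_lt_of_le (Real.rpow_pos_of_pos hδ _) hmax
  have hsM : M ≤ ξ₁ + ξ₂ := by
    apply max_le <;> apply max_le <;> linarith
  have hspos : 0 < ξ₁ + ξ₂ := lt_of_lt_of_le hMpos hsM
  have key : ξ₁^3 + ξ₂^3 - ξ₃^3 - ξ₄^3 = 3 * (ξ₁ + ξ₂) * (ξ₃ * ξ₄ - ξ₁ * ξ₂) := by
    linear_combination ((ξ₁ + ξ₂)^2 + (ξ₁ + ξ₂) * (ξ₃ + ξ₄) + (ξ₃ + ξ₄)^2 - 3 * ξ₃ * ξ₄) * hsum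
  have habs : 3 * (ξ₁ + ξ₂) * |ξ₁ * ξ₂ - ξ₃ * ξ₄| ≤ δ := by
    calc 3 * (ξ₁ + ξ₂) * |ξ₁ * ξ₂ - ξ₃ * ξ₄|
        = |3 * (ξ₁ + ξ₂) * (ξ₃ * ξ₄ - ξ₁ * ξ₂)| := by
          rw [abs_mul, abs_of_nonneg (by linarith : (0:ℝ) ≤ 3 * (ξ₁ + ξ₂)), abs_sub_comm]
      _ = |ξ₁^3 + ξ₂^3 - ξ₃^3 - ξ₄^3| := by rw [key]
      _ ≤ δ := hcube
  have hxnn : 0 ≤ |ξ₁ * ξ₂ - ξ₃ * ξ₄| := abs_nonneg _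
  have hfin : |ξ₁ * ξ₂ - ξ₃ * ξ₄| * M ≤ δ := by
    nlinarith [mul_le_mul_of_nonneg_left hsM hxnn]
  have hrw : δ / (3 * M) * 3 = δ / M := by field_simp
  rw [hrw, le_div_iff₀ hMpos]
  exact hfin
end

section
/- Let h > 0, σ > 0, r > 1 with h ≪ σ², and let z, z' ∈ ℂ, ℓ, ℓ_1, C, C_1 ∈ ℂ with |ℓ|, |ℓ_1| ≤ A·r^{-1}σ, |C|, |C_1| ≤ A, and Δz = z' - z. Denote γ(z) = (z, z²) ∈ ℂ², γ'(z) = (1, 2z), n(z) = (-2·conj(z), 1). Suppose h·γ(z) + ℓ·γ'(z) + C·r^{-2}·n(z) = h·γ(z') + ℓ_1·γ'(z') + C_1·r^{-2}·n(z'). Then, with 1+4|z|² ≥ 1: (i) ℓ = ℓ_1 + h·Δz + O(r^{-2}·(1+|Δz|)) and (ii) (h·Δz/2 + ℓ_1)·Δz = O(r^{-2}·(1+|Δz|)), where the implicit constants depend only on A and an upper bound for |z|, |z'|. -/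
/-- Compatibility equations from matching two plank representations of a point
over the complex parabola `γ(z) = (z, z²)`, `γ'(z) = (1, 2z)`,
`n(z) = (-2 conj z, 1)`. -/
theorem stmt_14 (A R : ℝ) (hA : 0 < A) (hR : 0 < R) :
    ∃ K : ℝ, 0 < K ∧
      ∀ (h σ r : ℝ) (z z' ℓ ℓ₁ C C₁ : ℂ), 0 < h → 0 < σ → 1 < r →
        h ≤ σ^2 →
        ‖z‖ ≤ R → ‖z'‖ ≤ R →
        ‖ℓ‖ ≤ A * r⁻¹ * σ → ‖ℓ₁‖ ≤ A * r⁻¹ * σ →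
        ‖C‖ ≤ A → ‖C₁‖ ≤ A →
        (h : ℂ) • ((z, z^2) : ℂ × ℂ) + ℓ • ((1, 2*z) : ℂ × ℂ)
            + (C / (r:ℂ)^2) • ((-2 * (starRingEnd ℂ) z, 1) : ℂ × ℂ)
          = (h : ℂ) • ((z', z'^2) : ℂ × ℂ) + ℓ₁ • ((1, 2*z') : ℂ × ℂ)
            + (C₁ / (r:ℂ)^2) • ((-2 * (starRingEnd ℂ) z', 1) : ℂ × ℂ) →
        ‖ℓ - (ℓ₁ + (h : ℂ) * (z' - z))‖
            ≤ K * r⁻¹^2 * (1 + ‖z' - z‖) ∧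
          ‖((h : ℂ) * (z' - z) / 2 + ℓ₁) * (z' - z)‖
            ≤ K * r⁻¹^2 * (1 + ‖z' - z‖) := by
  refine ⟨A * (1 + 4*R + 4*R^2) + 1, by positivity, ?_⟩
  intro h σ r z z' ℓ ℓ₁ C C₁ hh hσ hr hhσ hz hz' hℓ hℓ₁ hC hC₁ heq
  have hr0 : (0:ℝ) < r := by linarith
  simp only [Prod.smul_mk, Prod.mk_add_mk, Prod.mk.injEq, smul_eq_mul] at heq
  obtain ⟨e1, e2⟩ := heq
  have key1 : ℓ - (ℓ₁ + (h : ℂ) * (z' - z))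
      = (2*C*(starRingEnd ℂ) z - 2*C₁*(starRingEnd ℂ) z') / (r:ℂ)^2 := by
    linear_combination e1
  have key2 : ((h : ℂ) * (z' - z) / 2 + ℓ₁) * (z' - z)
      = (C - C₁) / (r:ℂ)^2 / 2
        + (2*C*(starRingEnd ℂ) z - 2*C₁*(starRingEnd ℂ) z') / (r:ℂ)^2 * z := by
    linear_combination (-(1:ℂ)/2) * e2 + z * e1
  have har : ‖(r:ℂ)^2‖ = r^2 := by
    rw [norm_pow, Complex.norm_real, Real.norm_of_nonneg hr0.le]
  have hnum : ‖2*C*(starRingEnd ℂ) z - 2*C₁*(starRingEnd ℂ) z'‖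
      ≤ 4 * A * R := by
    calc ‖2*C*(starRingEnd ℂ) z - 2*C₁*(starRingEnd ℂ) z'‖
        ≤ ‖2*C*(starRingEnd ℂ) z‖ + ‖2*C₁*(starRingEnd ℂ) z'‖ :=
          norm_sub_le _ _
      _ ≤ 4 * A * R := by
          simp only [norm_mul, Complex.norm_two, Complex.norm_conj]
          nlinarith [norm_nonneg C, norm_nonneg C₁,
            norm_nonneg z, norm_nonneg z']
  have hd : 0 ≤ ‖z' - z‖ := norm_nonneg _
  have hri : (0:ℝ) < r⁻¹^2 := by positivity
  have h1d : (1:ℝ) ≤ 1 + ‖z' - z‖ := by linarith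
  have hK1 : 4 * A * R ≤ A * (1 + 4*R + 4*R^2) + 1 := by
    nlinarith [mul_nonneg hA.le (sq_nonneg R)]
  have hK2 : A + 4 * A * R^2 ≤ A * (1 + 4*R + 4*R^2) + 1 := by
    nlinarith [mul_nonneg (mul_nonneg hA.le hR.le) hR.le, mul_nonneg hA.le hR.le]
  have hKpos : (0:ℝ) ≤ (A * (1 + 4*R + 4*R^2) + 1) * r⁻¹^2 := by positivity
  constructor
  · rw [key1, norm_div, har, div_eq_mul_inv, ← inv_pow]
    calc ‖2*C*(starRingEnd ℂ) z - 2*C₁*(starRingEnd ℂ) z'‖ * r⁻¹^2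
        ≤ (4 * A * R) * r⁻¹^2 := by nlinarith
      _ ≤ (A * (1 + 4*R + 4*R^2) + 1) * r⁻¹^2 :=
          mul_le_mul_of_nonneg_right hK1 hri.le
      _ ≤ (A * (1 + 4*R + 4*R^2) + 1) * r⁻¹^2 * (1 + ‖z' - z‖) :=
          le_mul_of_one_le_right hKpos h1d
  · rw [key2]
    have b1 : ‖(C - C₁) / (r:ℂ)^2 / 2‖ ≤ A * r⁻¹^2 := by
      rw [norm_div, norm_div, har, Complex.norm_two, div_eq_mul_inv, div_eq_mul_inv,
        ← inv_pow]
      have : ‖C - C₁‖ ≤ 2 * A := by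
        calc ‖C - C₁‖ ≤ ‖C‖ + ‖C₁‖ :=
              norm_sub_le _ _
          _ ≤ 2 * A := by linarith
      nlinarith
    have b2 : ‖(2*C*(starRingEnd ℂ) z - 2*C₁*(starRingEnd ℂ) z') / (r:ℂ)^2 * z‖
        ≤ 4 * A * R^2 * r⁻¹^2 := by
      rw [norm_mul, norm_div, har, div_eq_mul_inv, ← inv_pow]
      calc ‖2*C*(starRingEnd ℂ) z - 2*C₁*(starRingEnd ℂ) z'‖ * r⁻¹^2
              * ‖z‖
          ≤ (4 * A * R) * r⁻¹^2 * R := by gcongr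
        _ = 4 * A * R^2 * r⁻¹^2 := by ring
    calc ‖(C - C₁) / (r:ℂ)^2 / 2
            + (2*C*(starRingEnd ℂ) z - 2*C₁*(starRingEnd ℂ) z') / (r:ℂ)^2 * z‖
        ≤ ‖(C - C₁) / (r:ℂ)^2 / 2‖
            + ‖(2*C*(starRingEnd ℂ) z - 2*C₁*(starRingEnd ℂ) z') / (r:ℂ)^2 * z‖ :=
          norm_add_le _ _
      _ ≤ A * r⁻¹^2 + 4 * A * R^2 * r⁻¹^2 := add_le_add b1 b2
      _ = (A + 4 * A * R^2) * r⁻¹^2 := by ring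
      _ ≤ (A * (1 + 4*R + 4*R^2) + 1) * r⁻¹^2 :=
          mul_le_mul_of_nonneg_right hK2 hri.le
      _ ≤ (A * (1 + 4*R + 4*R^2) + 1) * r⁻¹^2 * (1 + ‖z' - z‖) :=
          le_mul_of_one_le_right hKpos h1d
end
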